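/- Let i > p−2 and let γ ∈ Ĥ_i. Then J_i(γ) ⊆ 𝔭^{3i+3−p}; equivalently, if J_i(γ) = 𝔭^λ is nonzero then λ ≥ 3i+3−p. -/

import Mathlib

set_option synthInstance.maxHeartbeats 1000000
set_option maxHeartbeats 1000000

namespace MaximalClassFrame

variable (p : ℕ) [Fact p.Prime]
variable (K : Type) [Field K] [Algebra ℚ_[p] K] [Algebra ℤ_[p] K]
  [IsScalarTower ℤ_[p] ℚ_[p] K]

/-- The maximal order `𝒪` of `K`: the integral closure of `ℤ_p` in `K`. -/
noncomputable abbrev 𝒪 : Subalgebra ℤ_[p] K := integralClosure ℤ_[p] K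

variable (θ : 𝒪 p K)

/-- The maximal ideal `𝔭` of `𝒪`, generated by `κ = θ - 1`. -/
noncomputable def pid : Ideal (𝒪 p K) := Ideal.span {θ - 1}

/-- A `ℤ_p`-bilinear map `γ : 𝒪 × 𝒪 → 𝒪` is `P`-equivariant if it is
alternating and satisfies `γ(θx, θy) = θ·γ(x,y)` for all `x, y`. -/
def IsPEquivariant (γ : 𝒪 p K →ₗ[ℤ_[p]] 𝒪 p K →ₗ[ℤ_[p]] 𝒪 p K) : Prop :=
  (∀ x, γ x x = 0) ∧ ∀ x y, γ (θ * x) (θ * y) = θ * γ x y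

/-- `γ ∈ Ĥ_i`: the additive subgroup of `𝒪` generated by
`{γ(x,y) : x, y ∈ 𝔭^i}` equals `𝔭^(2i+1)`. -/
def InHhat (i : ℕ) (γ : 𝒪 p K →ₗ[ℤ_[p]] 𝒪 p K →ₗ[ℤ_[p]] 𝒪 p K) : Prop :=
  Submodule.span ℤ (Set.image2 (fun x y => γ x y)
      ((pid p K θ ^ i : Ideal (𝒪 p K)) : Set (𝒪 p K))
      ((pid p K θ ^ i : Ideal (𝒪 p K)) : Set (𝒪 p K)))
    = (pid p K θ ^ (2 * i + 1)).restrictScalars ℤ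

variable (γ : 𝒪 p K →ₗ[ℤ_[p]] 𝒪 p K →ₗ[ℤ_[p]] 𝒪 p K)

/-- The ideal `J_i(γ)` of `𝒪` generated by the Jacobi expressions
`γ(γ(x,y),z) + γ(γ(y,z),x) + γ(γ(z,x),y)` for `x, y, z ∈ 𝔭^i`. -/
noncomputable def Jid (i : ℕ) : Ideal (𝒪 p K) :=
  Ideal.span {v : 𝒪 p K | ∃ x ∈ pid p K θ ^ i, ∃ y ∈ pid p K θ ^ i, ∃ z ∈ pid p K θ ^ i,
    v = γ (γ x y) z + γ (γ y z) x + γ (γ z x) y}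

/-- The ideals `W_k(i)`:  `W_1(i) = 𝔭^i` and `W_{k+1}(i)` is the ideal
generated by `{γ(x,y) : x ∈ W_k(i), y ∈ 𝔭^i}`. -/
noncomputable def Wid (i : ℕ) : ℕ → Ideal (𝒪 p K)
  | 0 => ⊤
  | 1 => pid p K θ ^ i
  | (k + 2) => Ideal.span (Set.image2 (fun x y => γ x y)
      ((Wid i (k + 1) : Ideal (𝒪 p K)) : Set (𝒪 p K))
      ((pid p K θ ^ i : Ideal (𝒪 p K)) : Set (𝒪 p K)))

/-- For `i > p−2` and `γ ∈ Ĥ_i` one has `J_i(γ) ⊆ 𝔭^{3i+3−p}`. -/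
theorem frame_J_bound (hp : 5 ≤ p) (hθ : IsPrimitiveRoot (θ : K) p)
    (hgen : Algebra.adjoin ℚ_[p] {(θ : K)} = ⊤)
    (hγ : IsPEquivariant p K θ γ)
    (i : ℕ) (hi : p - 2 < i) (hγi : InHhat p K θ i γ) :
    Jid p K θ γ i ≤ pid p K θ ^ (3 * i + 3 - p) := by
  classical
  have hprime : p.Prime := Fact.out
  set κ : 𝒪 p K := θ - 1 with hκdef
  have hθO : IsPrimitiveRoot θ p :=
    IsPrimitiveRoot.of_map_of_injective (f := (𝒪 p K).val) hθ Subtype.coe_injective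
  have hκne : κ ≠ 0 := sub_ne_zero.mpr (hθO.ne_one hprime.one_lt)
  have hpid : ∀ (n : ℕ) (x : 𝒪 p K), x ∈ pid p K θ ^ n ↔ κ ^ n ∣ x := by
    intro n x
    rw [hκdef, pid, Ideal.span_singleton_pow, Ideal.mem_span_singleton]
  have hp1 : p - 1 + 1 = p := by omega
  have hprod : ∏ k ∈ Finset.range (p - 1), (1 - θ ^ (k + 1)) = ((p : ℕ) : 𝒪 p K) := by
    have h := IsPrimitiveRoot.prod_one_sub_pow_eq_order (n := p - 1) (μ := θ)
      (by rw [hp1]; exact hθO)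
    rw [h, ← Nat.cast_add_one, hp1]
  have hfac : ∀ k : ℕ, 1 - θ ^ (k + 1) = κ * (-(∑ j ∈ Finset.range (k + 1), θ ^ j)) := by
    intro k
    linear_combination (∑ j ∈ Finset.range (k + 1), θ ^ j) * hκdef + geom_sum_mul θ (k + 1)
  have hunit : ∀ k ∈ Finset.range (p - 1), IsUnit (-(∑ j ∈ Finset.range (k + 1), θ ^ j)) := by
    intro k hk
    rw [Finset.mem_range] at hk
    have hcop : Nat.Coprime (k + 1) p := by
      have hnd : ¬ p ∣ (k + 1) := fun h => absurd (Nat.le_of_dvd (by omega) h) (by omega)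
      exact Nat.coprime_comm.mp ((Nat.Prime.coprime_iff_not_dvd hprime).mpr hnd)
    obtain ⟨m, -, hm⟩ := Nat.exists_mul_mod_eq_one_of_coprime hcop (by omega)
    have hpowp : θ ^ p = 1 := hθO.pow_eq_one
    have hpow : θ ^ ((k + 1) * m) = θ := by
      conv_lhs => rw [← Nat.div_add_mod ((k + 1) * m) p]
      rw [pow_add, pow_mul, hpowp, one_pow, one_mul, hm, pow_one]
    have hgeom1 : (∑ j ∈ Finset.range (k + 1), θ ^ j) * κ = θ ^ (k + 1) - 1 := by
      rw [hκdef]; exact geom_sum_mul θ (k + 1)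
    have hgeom2 : (∑ j ∈ Finset.range m, (θ ^ (k + 1)) ^ j) * (θ ^ (k + 1) - 1)
        = θ ^ ((k + 1) * m) - 1 := by
      rw [geom_sum_mul, ← pow_mul]
    have hkey : ((∑ j ∈ Finset.range (k + 1), θ ^ j) *
        (∑ j ∈ Finset.range m, (θ ^ (k + 1)) ^ j) - 1) * κ = 0 := by
      linear_combination (∑ j ∈ Finset.range m, (θ ^ (k + 1)) ^ j) * hgeom1 + hgeom2
        + hpow - hκdef
    have h1 : (∑ j ∈ Finset.range (k + 1), θ ^ j) *
        (∑ j ∈ Finset.range m, (θ ^ (k + 1)) ^ j) = 1 := by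
      rcases mul_eq_zero.mp hkey with h | h
      · exact sub_eq_zero.mp h
      · exact absurd h hκne
    exact (IsUnit.of_mul_eq_one _ h1).neg
  set U : 𝒪 p K := ∏ k ∈ Finset.range (p - 1), (-(∑ j ∈ Finset.range (k + 1), θ ^ j)) with hU
  have hUunit : IsUnit U :=
    Finset.prod_induction _ IsUnit (fun a b => IsUnit.mul) isUnit_one hunit
  have hpκ : ((p : ℕ) : 𝒪 p K) = κ ^ (p - 1) * U := by
    rw [hU, ← hprod, Finset.prod_congr rfl (fun k _ => hfac k), Finset.prod_mul_distrib,
      Finset.prod_const, Finset.card_range]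
  obtain ⟨u, huv⟩ := hUunit
  have hκp : κ ^ (p - 1) = ((p : ℕ) : 𝒪 p K) * (↑u⁻¹ : 𝒪 p K) := by
    rw [hpκ, mul_assoc, ← huv, Units.mul_inv, mul_one]
  have hmem : ∀ x ∈ pid p K θ ^ i, ∀ y ∈ pid p K θ ^ i,
      γ x y ∈ pid p K θ ^ (2 * i + 1) := by
    intro x hx y hy
    have h1 : γ x y ∈ Submodule.span ℤ (Set.image2 (fun x y => γ x y)
        ((pid p K θ ^ i : Ideal (𝒪 p K)) : Set (𝒪 p K))
        ((pid p K θ ^ i : Ideal (𝒪 p K)) : Set (𝒪 p K))) :=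
      Submodule.subset_span ⟨x, hx, y, hy, rfl⟩
    rw [hγi] at h1
    exact h1
  have key : ∀ a ∈ pid p K θ ^ i, ∀ b ∈ pid p K θ ^ i, ∀ c ∈ pid p K θ ^ i,
      γ (γ a b) c ∈ pid p K θ ^ (3 * i + 3 - p) := by
    intro a ha b hb c hc
    obtain ⟨c0, hc0⟩ := (hpid _ _).mp (hmem a ha b hb)
    set m := (i + 1) / (p - 1) with hmdef
    set r := (i + 1) % (p - 1) with hrdef
    have hdm : (p - 1) * m + r = i + 1 := Nat.div_add_mod (i + 1) (p - 1)
    have hrlt : r < p - 1 := by rw [hrdef]; exact Nat.mod_lt _ (by omega)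
    set w' : 𝒪 p K := (↑u⁻¹ : 𝒪 p K) ^ m * (κ ^ (i + r) * c0) with hw'def
    have hsplit : κ ^ (2 * i + 1) = (κ ^ (p - 1)) ^ m * κ ^ (i + r) := by
      rw [← pow_mul, ← pow_add]
      congr 1
      omega
    have hw : γ a b = ((p : ℕ) : 𝒪 p K) ^ m * w' := by
      rw [hc0, hsplit, hκp, hw'def]
      ring
    have hscal : γ (γ a b) c = ((p : ℕ) : 𝒪 p K) ^ m * γ w' c := by
      have halg : ((p : ℕ) : 𝒪 p K) ^ m * w' = (((p : ℕ) : ℤ_[p]) ^ m) • w' := by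
        rw [Algebra.smul_def, map_pow, map_natCast]
      rw [hw, halg, map_smul, LinearMap.smul_apply, Algebra.smul_def, map_pow, map_natCast]
    have hw'mem : w' ∈ pid p K θ ^ i := by
      rw [hpid]
      exact ⟨(↑u⁻¹ : 𝒪 p K) ^ m * (κ ^ r * c0), by rw [hw'def, pow_add]; ring⟩
    obtain ⟨d, hd⟩ := (hpid _ _).mp (hmem w' hw'mem c hc)
    have hfin : γ (γ a b) c = κ ^ ((p - 1) * m + (2 * i + 1)) * ((U : 𝒪 p K) ^ m * d) := by
      rw [hscal, hd, hpκ]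
      ring
    rw [hpid]
    have harith : 3 * i + 3 - p ≤ (p - 1) * m + (2 * i + 1) := by omega
    exact dvd_trans (pow_dvd_pow κ harith) ⟨(U : 𝒪 p K) ^ m * d, hfin⟩
  rw [Jid, Ideal.span_le]
  rintro v ⟨x, hx, y, hy, z, hz, rfl⟩
  exact add_mem (add_mem (key _ hx _ hy _ hz) (key _ hy _ hz _ hx)) (key _ hz _ hx _ hy)

end MaximalClassFrame
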